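/- Let G be a finite abelian p-group and e ≥ 1. Then the group of normalized units decomposes as V(Z_{p^e}G) = G × L for some subgroup L of V(Z_{p^e}G); i.e., G is a direct factor of V(Z_{p^e}G). -/

import Mathlib

set_option linter.unusedSectionVars false

/-- The augmentation map of a group ring. -/
noncomputable def aug (R G : Type*) [CommRing R] [CommGroup G] :
    MonoidAlgebra R G →ₐ[R] R := MonoidAlgebra.lift R R G 1

/-- The group of normalized units of a group ring. -/
noncomputable def Vgrp (R G : Type*) [CommRing R] [CommGroup G] :
    Subgroup (MonoidAlgebra R G)ˣ :=
  MonoidHom.ker (Units.map ((aug R G).toRingHom : MonoidAlgebra R G →* R))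

/-- The canonical embedding of `G` into the unit group of its group ring. -/
noncomputable def iota (R G : Type*) [CommRing R] [CommGroup G] :
    G →* (MonoidAlgebra R G)ˣ :=
  (Units.map (MonoidAlgebra.of R G)).comp (toUnits : G ≃* Gˣ).toMonoidHom

open Subgroup

universe u

section PartI

variable {p : ℕ}

lemma card_lt_of_lt {A : Type u} [Group A] [Finite A] {D D' : Subgroup A} (h : D < D') :
    Nat.card D < Nat.card D' := by
  have hs : (D : Set A) ⊂ (D' : Set A) := by
    rw [Set.ssubset_iff_of_subset (by exact_mod_cast h.le)]
    obtain ⟨x, hx, hx'⟩ := SetLike.exists_of_lt h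
    exact ⟨x, hx, hx'⟩
  have := Set.ncard_lt_ncard hs (Set.toFinite _)
  rw [← Nat.card_coe_set_eq, ← Nat.card_coe_set_eq] at this
  exact this

lemma uniform_tor {A : Type u} [CommGroup A] [Finite A] (p : ℕ)
    (htor : ∀ a : A, ∃ k, a ^ p ^ k = 1) : ∃ N, ∀ a : A, a ^ p ^ N = 1 := by
  cases nonempty_fintype A
  refine ⟨Finset.univ.sup (fun a : A => (htor a).choose), fun a => ?_⟩
  have h1 : (htor a).choose ≤ Finset.univ.sup (fun a : A => (htor a).choose) :=
    Finset.le_sup (f := fun a : A => (htor a).choose) (Finset.mem_univ a)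
  obtain ⟨m, hm⟩ := Nat.exists_eq_add_of_le h1
  rw [hm, pow_add, pow_mul, (htor a).choose_spec, one_pow]

/-- Lemma A: a cyclic "pure" subgroup of a finite abelian p-group is a direct factor. -/
lemma lemA (hp : p.Prime) : ∀ (n : ℕ) (A : Type u) [CommGroup A] [Finite A],
    Nat.card A ≤ n →
    (∀ a : A, ∃ k, a ^ p ^ k = 1) → ∀ (c : A),
    (∀ (j : ℕ) (y : A), y ^ p ^ j ∈ zpowers c → ∃ i : ℤ, y ^ p ^ j = (c ^ i) ^ p ^ j) →
    ∃ D : Subgroup A, zpowers c ⊓ D = ⊥ ∧ ∀ a : A, ∃ (i : ℤ), ∃ d ∈ D, a = c ^ i * d := by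
  intro n
  induction n using Nat.strong_induction_on with
  | _ n IH =>
    intro A _ _ hcard htor c hpure
    classical
    set Q : Subgroup A := (powMonoidHom p : A →* A).range with hQ
    by_cases hQtop : Q = ⊤
    · -- A is trivial
      obtain ⟨N, hN⟩ := uniform_tor p htor
      have htriv : ∀ a : A, a = 1 := by
        have key : ∀ (k : ℕ) (a : A), ∃ b : A, a = b ^ p ^ k := by
          intro k
          induction k with
          | zero => exact fun a => ⟨a, by simp⟩
          | succ k ih =>
            intro a
            have ha : a ∈ Q := hQtop ▸ mem_top a
            obtain ⟨b, hb⟩ := ha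
            obtain ⟨e, he⟩ := ih b
            exact ⟨e, by rw [← hb, he, pow_succ, pow_mul]; rfl⟩
        intro a
        obtain ⟨b, hb⟩ := key N a
        rw [hb, hN b]
      refine ⟨⊥, inf_bot_eq _, fun a => ⟨0, 1, one_mem _, by rw [htriv a]; simp⟩⟩
    · -- main case
      have hQlt : Nat.card Q < Nat.card A :=
        lt_of_le_of_ne (Nat.card_le_card_of_injective _ Q.subtype_injective)
          (fun h => hQtop (Subgroup.eq_top_of_card_eq _ h))
      have hcp : c ^ p ∈ Q := ⟨c, rfl⟩
      set c' : Q := ⟨c ^ p, hcp⟩ with hc'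
      -- purity for c' inside Q
      have hpure' : ∀ (j : ℕ) (y : Q), y ^ p ^ j ∈ zpowers c' →
          ∃ i : ℤ, y ^ p ^ j = (c' ^ i) ^ p ^ j := by
        intro j y hy
        obtain ⟨k, hk⟩ := mem_zpowers_iff.mp hy
        obtain ⟨z, hz⟩ := y.2
        have hz' : z ^ p ^ (j + 1) ∈ zpowers c := by
          have : (y : A) ^ p ^ j = (c ^ p) ^ k := by
            have := congrArg (Subtype.val) hk
            push_cast at this
            exact this.symm
          rw [pow_succ', pow_mul, show z ^ p = (y : A) from hz, this,
            ← zpow_natCast c p, ← zpow_mul]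
          exact zpow_mem (mem_zpowers c) _
        obtain ⟨i, hi⟩ := hpure (j + 1) z hz'
        refine ⟨i, ?_⟩
        apply Subtype.ext
        push_cast
        have hyz : (y : A) = z ^ p := hz.symm
        calc (y : A) ^ p ^ j = z ^ p ^ (j + 1) := by
              rw [hyz, pow_succ', pow_mul]
          _ = (c ^ i) ^ p ^ (j + 1) := hi
          _ = ((c ^ p) ^ i) ^ p ^ j := by
              rw [pow_succ', pow_mul, ← zpow_natCast c p, ← zpow_mul, mul_comm,
                zpow_mul, zpow_natCast]
      -- apply induction hypothesis inside Q
      obtain ⟨D', hD'bot, hD'dec⟩ :=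
        IH (Nat.card Q) (hQlt.trans_le hcard) Q le_rfl
          (fun a => ⟨(htor (a : A)).choose,
            Subtype.ext (by push_cast; exact (htor (a : A)).choose_spec)⟩) c' hpure'
      set E : Subgroup A := D'.map Q.subtype with hE
      have hCE : zpowers c ⊓ E = ⊥ := by
        rw [eq_bot_iff]
        rintro x ⟨hx1, hx2⟩
        obtain ⟨d', hd', hdx⟩ := hx2
        have hxQ : x ∈ Q := by rw [← hdx]; exact d'.2
        obtain ⟨z, hz0⟩ := id hxQ
        have hz : z ^ p = x := hz0
        have hx1' : z ^ p ^ 1 ∈ zpowers c := by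
          simpa using (show z ^ p ∈ zpowers c by rw [show z ^ p = x from hz]; exact hx1)
        obtain ⟨i, hi⟩ := hpure 1 z hx1'
        have hxc : x = (c ^ p) ^ i := by
          have hthis : z ^ p = (c ^ i) ^ p := by simpa using hi
          rw [← hz, hthis, ← zpow_natCast c p, ← zpow_mul, mul_comm, zpow_mul, zpow_natCast]
        have hmem : (⟨x, hxQ⟩ : Q) ∈ zpowers c' ⊓ D' := by
          constructor
          · exact mem_zpowers_iff.mpr ⟨i, Subtype.ext (by push_cast; exact hxc.symm)⟩
          · have : d' = (⟨x, hxQ⟩ : Q) := Subtype.ext hdx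
            rw [← this]; exact hd'
        rw [hD'bot] at hmem
        have : (⟨x, hxQ⟩ : Q) = 1 := hmem
        simpa using congrArg Subtype.val this
      -- choose a maximal D containing E with trivial intersection
      have : Finite (Subgroup A) :=
        Finite.of_injective (fun D : Subgroup A => (D : Set A)) SetLike.coe_injective
      set S : Set (Subgroup A) := {D | E ≤ D ∧ zpowers c ⊓ D = ⊥} with hS
      have hSne : Nonempty S := ⟨⟨E, le_refl E, hCE⟩⟩
      obtain ⟨⟨D, hDS⟩, hDmax⟩ := Finite.exists_max (fun D : S => Nat.card (D : Subgroup A))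
      -- D is the complement
      have htop : ∀ a : A, a ∈ zpowers c ⊔ D := by
        by_contra hcon
        push_neg at hcon
        obtain ⟨a0, ha0⟩ := hcon
        set T := zpowers c ⊔ D with hT
        have hDT : D ≤ T := le_sup_right
        have hcT : zpowers c ≤ T := le_sup_left
        -- find a ∉ T with a ^ p ∈ T
        obtain ⟨N, hN⟩ := uniform_tor p htor
        have hex : ∃ k, a0 ^ p ^ k ∈ T := ⟨N, by rw [hN]; exact one_mem T⟩
        set k := Nat.find hex with hk
        have hk0 : k ≠ 0 := by
          intro h
          have h2 := Nat.find_spec hex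
          rw [← hk, h, pow_zero, pow_one] at h2
          exact ha0 h2
        obtain ⟨k', hk'⟩ := Nat.exists_eq_succ_of_ne_zero hk0
        set a : A := a0 ^ p ^ k' with ha
        have haT : a ∉ T := Nat.find_min hex (by omega)
        have hapT : a ^ p ∈ T := by
          have h2 := Nat.find_spec hex
          rw [← hk, hk'] at h2
          rw [ha, ← pow_mul, ← pow_succ]
          exact h2
        -- decompose a ^ p in Q
        have hapQ : a ^ p ∈ Q := ⟨a, rfl⟩
        obtain ⟨i, d', hd', hdec⟩ := hD'dec ⟨a ^ p, hapQ⟩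
        have hdecA : a ^ p = (c ^ p) ^ i * (d' : A) := by
          have := congrArg Subtype.val hdec
          push_cast at this
          exact this
        have hfD : (d' : A) ∈ D := hDS.1 ⟨d', hd', rfl⟩
        set x : A := a * (c ^ i)⁻¹ with hx
        have hxT : x ∉ T := by
          intro h
          exact haT (by
            have : a = x * c ^ i := by rw [hx]; group
            rw [this]
            exact mul_mem h (hcT (zpow_mem (mem_zpowers c) i)))
        have hxp : x ^ p = (d' : A) := by
          rw [hx, mul_pow, hdecA, inv_pow, ← zpow_natCast (c ^ i) p, ← zpow_mul,
            mul_comm (i : ℤ), zpow_mul, zpow_natCast]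
          simp
        have hxpD : x ^ p ∈ D := hxp ▸ hfD
        have hxD : x ∉ D := fun h => hxT (hDT h)
        set D'' := D ⊔ zpowers x with hD''
        have hlt : D < D'' := lt_of_le_of_ne le_sup_left (by
          intro h
          exact hxD (h ▸ (le_sup_right (α := Subgroup A) (mem_zpowers x))))
        have hED'' : E ≤ D'' := hDS.1.trans le_sup_left
        have hD''S : D'' ∉ S := by
          intro hmem
          have := hDmax ⟨D'', hmem⟩
          simp only at this
          exact absurd this (not_le.mpr (card_lt_of_lt hlt))
        have hne : zpowers c ⊓ D'' ≠ ⊥ := fun h => hD''S ⟨hED'', h⟩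
        rw [Subgroup.ne_bot_iff_exists_ne_one] at hne
        obtain ⟨⟨w, hw⟩, hwne⟩ := hne
        have hw1 : w ≠ 1 := by simpa [Subtype.ext_iff] using hwne
        obtain ⟨hwc, hwD''⟩ := hw
        obtain ⟨y, hy, z, hz, hyzw⟩ := Subgroup.mem_sup.mp hwD''
        obtain ⟨s, hs⟩ := mem_zpowers_iff.mp hz
        by_cases hps : (p : ℤ) ∣ s
        · obtain ⟨s', hs'⟩ := hps
          have hzD : z ∈ D := by
            rw [← hs, hs', zpow_mul, zpow_natCast]
            exact zpow_mem hxpD s'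
          have : w ∈ zpowers c ⊓ D := ⟨hwc, by rw [← hyzw]; exact mul_mem hy hzD⟩
          rw [hDS.2] at this
          exact hw1 this
        · have hpprime : Prime (p : ℤ) := Nat.prime_iff_prime_int.mp hp
          have hcop : IsCoprime (p : ℤ) s := (Prime.coprime_iff_not_dvd hpprime).mpr hps
          obtain ⟨α, β, hαβ⟩ := hcop
          have hxT' : x ∈ T := by
            have hx1 : x = (x ^ p) ^ α * (x ^ s) ^ β := by
              rw [← zpow_natCast x p, ← zpow_mul, ← zpow_mul, ← zpow_add, mul_comm (p:ℤ) α,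
                mul_comm s β]
              rw [hαβ, zpow_one]
            have hxsT : x ^ s ∈ T := by
              have : x ^ s = y⁻¹ * w := by rw [← hyzw, hs]; group
              rw [this]
              exact mul_mem (inv_mem (hDT hy)) (hcT hwc)
            rw [hx1]
            exact mul_mem (zpow_mem (hDT hxpD) α) (zpow_mem hxsT β)
          exact hxT hxT'
      refine ⟨D, hDS.2, fun a => ?_⟩
      obtain ⟨y, hy, z, hz, hyz⟩ := Subgroup.mem_sup.mp (htop a)
      obtain ⟨i, hi⟩ := mem_zpowers_iff.mp hy
      exact ⟨i, z, hz, by rw [← hyz, hi]⟩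

end PartI

/-- Main abstract theorem: a pure subgroup of a finite abelian p-group is a direct factor. -/
lemma partP (hp : p.Prime) : ∀ (n : ℕ) (A : Type u) [CommGroup A] [Finite A]
    (H : Subgroup A), Nat.card H ≤ n →
    (∀ a : A, ∃ k, a ^ p ^ k = 1) →
    (∀ (j : ℕ) (a : A), a ^ p ^ j ∈ H → ∃ h ∈ H, h ^ p ^ j = a ^ p ^ j) →
    ∃ L : Subgroup A, H ⊓ L = ⊥ ∧ ∀ a : A, ∃ h ∈ H, ∃ l ∈ L, a = h * l := by
  intro n
  induction n using Nat.strong_induction_on with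
  | _ n IH =>
    intro A _ _ H hcard htor hpure
    classical
    by_cases hHbot : H = ⊥
    · exact ⟨⊤, by simp [hHbot], fun a => ⟨1, one_mem _, a, mem_top a, (one_mul a).symm⟩⟩
    · -- pick c in H of maximal order
      have : Nonempty H := ⟨1, one_mem H⟩
      obtain ⟨⟨c, hcH⟩, hcmax⟩ := Finite.exists_max (fun h : H => orderOf (h : A))
      have hc1 : c ≠ 1 := by
        intro h
        apply hHbot
        rw [eq_bot_iff]
        intro x hx
        have h1 := hcmax ⟨x, hx⟩
        simp only [h, orderOf_one] at h1
        have : orderOf x = 1 := le_antisymm h1 (orderOf_pos x)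
        exact Subgroup.mem_bot.mpr (orderOf_eq_one_iff.mp this)
      -- orders in H are p-powers bounded by orderOf c
      have horder : ∀ x : A, x ∈ H → ∃ s, orderOf x = p ^ s := by
        intro x _
        obtain ⟨k, hk⟩ := htor x
        obtain ⟨s, _, hs⟩ := (Nat.dvd_prime_pow hp).mp (orderOf_dvd_of_pow_eq_one hk)
        exact ⟨s, hs⟩
      obtain ⟨m, hm⟩ := horder c hcH
      -- purity of zpowers c
      have hpurec : ∀ (j : ℕ) (y : A), y ^ p ^ j ∈ zpowers c →
          ∃ i : ℤ, y ^ p ^ j = (c ^ i) ^ p ^ j := by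
        intro j y hy
        have hyH : y ^ p ^ j ∈ H := (zpowers_le.mpr hcH) hy
        obtain ⟨h, hhH, hh⟩ := hpure j y hyH
        obtain ⟨s, hs⟩ := horder h hhH
        have hsm : s ≤ m := by
          have := hcmax ⟨h, hhH⟩
          simp only [hm, hs] at this
          exact (Nat.pow_le_pow_iff_right hp.one_lt).mp this
        by_cases hjs : s ≤ j
        · refine ⟨0, ?_⟩
          have : h ^ p ^ j = 1 := by
            obtain ⟨t, ht⟩ := Nat.exists_eq_add_of_le hjs
            rw [ht, pow_add, pow_mul, ← hs, pow_orderOf_eq_one, one_pow]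
          rw [← hh, this]
          simp
        · push_neg at hjs
          obtain ⟨k, hk⟩ := mem_zpowers_iff.mp hy
          -- y ^ p ^ j = c ^ k has order dividing p ^ (m - j)
          have hordx : (y ^ p ^ j) ^ p ^ (m - j) = 1 := by
            rw [← hh, ← pow_mul, ← pow_add]
            have : j + (m - j) = m := by omega
            rw [this]
            have : p ^ m = p ^ s * p ^ (m - s) := by rw [← pow_add]; congr 1; omega
            rw [this, pow_mul, ← hs, pow_orderOf_eq_one, one_pow]
          have hdvd : ((p : ℤ) ^ m) ∣ k * (p : ℤ) ^ (m - j) := by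
            have h1 : c ^ (k * (p : ℤ) ^ (m - j)) = 1 := by
              rw [zpow_mul, hk]
              exact_mod_cast hordx
            have := orderOf_dvd_iff_zpow_eq_one.mpr h1
            rw [hm] at this
            exact_mod_cast this
          have hpj : (p : ℤ) ^ j ∣ k := by
            have hsplit : (p : ℤ) ^ m = (p : ℤ) ^ j * (p : ℤ) ^ (m - j) := by
              rw [← pow_add]; congr 1; omega
            obtain ⟨t, ht⟩ := hdvd
            refine ⟨t, ?_⟩
            have hpne : (p : ℤ) ≠ 0 := by exact_mod_cast hp.pos.ne'
            have hne : ((p : ℤ) ^ (m - j)) ≠ 0 := pow_ne_zero _ hpne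
            apply mul_right_cancel₀ hne
            rw [ht, hsplit]; ring
          obtain ⟨t, ht⟩ := hpj
          refine ⟨t, ?_⟩
          rw [← hk, ht, ← zpow_natCast (c ^ t) (p ^ j), ← zpow_mul, mul_comm]
          push_cast
          ring_nf
      -- apply Lemma A
      obtain ⟨D, hDbot, hDdec⟩ := lemA hp (Nat.card A) A le_rfl htor c hpurec
      -- H' = H ⊓ D inside D
      set H' : Subgroup D := H.subgroupOf D with hH'
      have hcD : c ∉ D := by
        intro h
        have : c ∈ zpowers c ⊓ D := ⟨mem_zpowers c, h⟩
        rw [hDbot] at this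
        exact hc1 this
      have hcardH' : Nat.card H' < Nat.card H := by
        have hlt : H ⊓ D < H := lt_of_le_of_ne inf_le_left (by
          intro h
          exact hcD ((inf_eq_left.mp h) hcH))
        have hc2 : Nat.card H' = Nat.card (H ⊓ D : Subgroup A) := by
          rw [hH', ← Subgroup.inf_subgroupOf_right]
          exact Nat.card_congr
            (Subgroup.subgroupOfEquivOfLe (inf_le_right (a := H) (b := D))).toEquiv
        calc Nat.card H' = Nat.card (H ⊓ D : Subgroup A) := hc2
          _ < Nat.card H := card_lt_of_lt hlt
      -- purity of H' inside D
      have hpureH' : ∀ (j : ℕ) (y : D), y ^ p ^ j ∈ H' →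
          ∃ h ∈ H', h ^ p ^ j = y ^ p ^ j := by
        intro j y hy
        have hyH : (y : A) ^ p ^ j ∈ H := by
          have : ((y ^ p ^ j : D) : A) ∈ H := hy
          push_cast at this
          exact this
        obtain ⟨h, hhH, hh⟩ := hpure j (y : A) hyH
        obtain ⟨i, d, hd, hhdec⟩ := hDdec h
        have hdH : d ∈ H := by
          have : d = (c ^ i)⁻¹ * h := by rw [hhdec]; group
          rw [this]
          exact mul_mem (inv_mem (zpow_mem hcH i)) hhH
        have hkey : d ^ p ^ j = (y : A) ^ p ^ j := by
          have h1 : h ^ p ^ j = (c ^ i) ^ p ^ j * d ^ p ^ j := by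
            rw [hhdec, mul_pow]
          have h2 : (c ^ i) ^ p ^ j = ((y : A) ^ p ^ j) * (d ^ p ^ j)⁻¹ := by
            rw [← hh, h1]; group
          have h3 : (c ^ i) ^ p ^ j ∈ zpowers c ⊓ D :=
            Subgroup.mem_inf.mpr ⟨pow_mem (zpow_mem (mem_zpowers c) i) _,
              by rw [h2]; exact mul_mem (pow_mem y.2 _) (inv_mem (pow_mem hd _))⟩
          rw [hDbot] at h3
          have h4 : (c ^ i) ^ p ^ j = 1 := h3
          rw [← hh, h1, h4, one_mul]
        refine ⟨⟨d, hd⟩, ?_, ?_⟩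
        · show d ∈ H
          exact hdH
        · apply Subtype.ext
          push_cast
          exact hkey
      -- apply induction hypothesis inside D
      obtain ⟨L'', hL''bot, hL''dec⟩ :=
        IH (Nat.card H') (hcardH'.trans_le hcard) D H' le_rfl
          (fun a => ⟨(htor (a : A)).choose,
            Subtype.ext (by push_cast; exact (htor (a : A)).choose_spec)⟩) hpureH'
      set L : Subgroup A := L''.map D.subtype with hL
      refine ⟨L, ?_, ?_⟩
      · rw [eq_bot_iff]
        rintro x ⟨hxH, hxL⟩
        obtain ⟨l'', hl'', hlx⟩ := hxL
        have hxD : x ∈ D := by rw [← hlx]; exact l''.2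
        have hmem : (⟨x, hxD⟩ : D) ∈ H' ⊓ L'' := by
          constructor
          · show x ∈ H
            exact hxH
          · have : l'' = (⟨x, hxD⟩ : D) := Subtype.ext hlx
            rw [← this]; exact hl''
        rw [hL''bot] at hmem
        have : (⟨x, hxD⟩ : D) = 1 := hmem
        simpa using congrArg Subtype.val this
      · intro a
        obtain ⟨i, d, hd, hadec⟩ := hDdec a
        obtain ⟨h'', hh'', l'', hl'', hddec⟩ := hL''dec ⟨d, hd⟩
        have hddecA : d = (h'' : A) * (l'' : A) := by
          have := congrArg Subtype.val hddec
          push_cast at this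
          exact this
        refine ⟨c ^ i * (h'' : A), mul_mem (zpow_mem hcH i) hh'', (l'' : A),
          ⟨l'', hl'', rfl⟩, ?_⟩
        rw [hadec, hddecA, mul_assoc]

section PartII

open MonoidAlgebra Finsupp

variable {p e : ℕ} {G : Type*} [CommGroup G] [Fintype G]

/-- Binomial helper. -/
lemma binom_helper {R : Type*} [CommRing R] (t : R) (n : ℕ) :
    ∃ d : R, (1 + t) ^ n = 1 + n * t + t ^ 2 * d := by
  induction n with
  | zero => exact ⟨0, by simp⟩
  | succ n ih =>
    obtain ⟨d, hd⟩ := ih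
    refine ⟨d + n + d * t, ?_⟩
    rw [pow_succ, hd]
    push_cast
    ring

lemma one_add_p_pow {R : Type*} [CommRing R] (p : ℕ) (z : R) (j : ℕ) :
    ∃ w : R, (1 + p * z) ^ p ^ j = 1 + (p : R) ^ (j + 1) * w := by
  induction j with
  | zero => exact ⟨z, by simp⟩
  | succ j ih =>
    obtain ⟨w, hw⟩ := ih
    rw [pow_succ, pow_mul, hw]
    obtain ⟨d, hd⟩ := binom_helper ((p : R) ^ (j + 1) * w) p
    rw [hd]
    refine ⟨w + (p : R) ^ j * w ^ 2 * d, ?_⟩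
    ring

lemma aug_single {R : Type*} [CommRing R] (g : G) (a : R) :
    aug R G (MonoidAlgebra.single g a) = a := by
  unfold aug
  rw [MonoidAlgebra.lift_single]
  simp

lemma mem_Vgrp_iff {R : Type*} [CommRing R] (u : (MonoidAlgebra R G)ˣ) :
    u ∈ Vgrp R G ↔ aug R G (u : MonoidAlgebra R G) = 1 := by
  unfold Vgrp
  rw [MonoidHom.mem_ker, Units.ext_iff]
  simp [Units.coe_map]

lemma iota_val {R : Type*} [CommRing R] (g : G) :
    ((iota R G g : (MonoidAlgebra R G)ˣ) : MonoidAlgebra R G) =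
      MonoidAlgebra.single g 1 := by
  unfold iota
  simp [Units.coe_map, MonoidAlgebra.of_apply]

lemma iota_mem_Vgrp {R : Type*} [CommRing R] (g : G) : iota R G g ∈ Vgrp R G := by
  rw [mem_Vgrp_iff, iota_val, aug_single]

lemma zmod_pow_card_pow (hp : p.Prime) (n : ℕ) (b : ZMod p) : b ^ p ^ n = b := by
  haveI : Fact p.Prime := ⟨hp⟩
  induction n with
  | zero => simp
  | succ n ih => rw [pow_succ, pow_mul, ih, ZMod.pow_card]

/-- Frobenius in `MonoidAlgebra (ZMod p) G`. -/
lemma frob_pow (hp : p.Prime) (n : ℕ) (x : MonoidAlgebra (ZMod p) G) :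
    x ^ p ^ n = MonoidAlgebra.mapDomain (fun g : G => g ^ p ^ n) x := by
  haveI : Fact p.Prime := ⟨hp⟩
  haveI : CharP (MonoidAlgebra (ZMod p) G) p :=
    charP_of_injective_ringHom (f := MonoidAlgebra.singleOneRingHom)
      (fun a b h => by
        simpa using congrArg (fun f : MonoidAlgebra (ZMod p) G => f.coeff 1) h) p
  induction x using MonoidAlgebra.induction with
  | zero => rw [MonoidAlgebra.mapDomain_zero, zero_pow (pow_ne_zero n hp.ne_zero)]
  | single_add a b f ha hb ih =>
    rw [add_pow_char_pow, MonoidAlgebra.mapDomain_add, ih, MonoidAlgebra.mapDomain_single]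
    congr 1
    rw [MonoidAlgebra.single_pow, zmod_pow_card_pow hp]

/-- If the `mapDomain` image has nonzero coefficient at `g`, some preimage exists. -/
lemma exists_of_mapDomain_ne_zero {f : G → G} {x : MonoidAlgebra (ZMod p) G} {g : G}
    (h : (MonoidAlgebra.mapDomain f x).coeff g ≠ 0) : ∃ h' : G, f h' = g := by
  by_contra hcon
  push_neg at hcon
  apply h
  show (Finsupp.mapDomain f x.coeff) g = 0
  rw [Finsupp.mapDomain, Finsupp.sum_apply]
  apply Finset.sum_eq_zero
  intro a ha
  exact Finsupp.single_eq_of_ne (hcon a).symm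

/-- `mapDomain` along the constant-one map collapses to `single 1` of the augmentation. -/
lemma mapDomain_const_one (x : MonoidAlgebra (ZMod p) G) :
    MonoidAlgebra.mapDomain (fun _ : G => (1 : G)) x =
      MonoidAlgebra.single (1 : G) (aug (ZMod p) G x) := by
  induction x using MonoidAlgebra.induction with
  | zero => simp
  | single_add a b f ha hb ih =>
    rw [MonoidAlgebra.mapDomain_add, ih, MonoidAlgebra.mapDomain_single, map_add,
      aug_single a b]
    exact (MonoidAlgebra.single_add _ _ _).symm

variable (hdvd : p ∣ p ^ e)

/-- Reduction mod p on coefficients. -/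
noncomputable def phired (hdvd : p ∣ p ^ e) :
    MonoidAlgebra (ZMod (p ^ e)) G →+* MonoidAlgebra (ZMod p) G :=
  MonoidAlgebra.liftNCRingHom
    (MonoidAlgebra.singleOneRingHom.comp (ZMod.castHom hdvd (ZMod p)))
    (MonoidAlgebra.of (ZMod p) G) (fun _ _ => Commute.all _ _)

lemma phired_single (g : G) (a : ZMod (p ^ e)) :
    phired hdvd (MonoidAlgebra.single g a) =
      MonoidAlgebra.single g (ZMod.castHom hdvd (ZMod p) a) := by
  have h1 : phired hdvd (MonoidAlgebra.single g a)
      = ((MonoidAlgebra.singleOneRingHom.comp (ZMod.castHom hdvd (ZMod p))) :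
          ZMod (p ^ e) →+* MonoidAlgebra (ZMod p) G) a
        * (MonoidAlgebra.of (ZMod p) G) g :=
    MonoidAlgebra.liftNC_single _ _ _ _
  rw [h1]
  rw [show ((MonoidAlgebra.singleOneRingHom.comp (ZMod.castHom hdvd (ZMod p)))
      : ZMod (p ^ e) →+* MonoidAlgebra (ZMod p) G) a
      = MonoidAlgebra.single (1 : G) (ZMod.castHom hdvd (ZMod p) a) from rfl]
  rw [MonoidAlgebra.of_apply, MonoidAlgebra.single_mul_single, one_mul, mul_one]

lemma aug_phired (x : MonoidAlgebra (ZMod (p ^ e)) G) :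
    aug (ZMod p) G (phired hdvd x) =
      ZMod.castHom hdvd (ZMod p) (aug (ZMod (p ^ e)) G x) := by
  induction x using MonoidAlgebra.induction with
  | zero => simp
  | single_add a b f ha hb ih =>
    rw [map_add, map_add, map_add, ih, map_add]
    congr 1
    rw [phired_single, aug_single, aug_single]

lemma zmod_p_divides (a : ZMod (p ^ e)) (h : ZMod.castHom hdvd (ZMod p) a = 0)
    (hp : p.Prime) : ∃ b : ZMod (p ^ e), a = p * b := by
  haveI : NeZero (p ^ e) := ⟨pow_ne_zero _ hp.ne_zero⟩
  haveI : NeZero p := ⟨hp.ne_zero⟩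
  have ha : ((a.val : ℕ) : ZMod (p ^ e)) = a := ZMod.natCast_zmod_val a
  have h2 : ((a.val : ℕ) : ZMod p) = 0 := by
    rw [← map_natCast (ZMod.castHom hdvd (ZMod p)) a.val, ha, h]
  obtain ⟨m, hm⟩ := (ZMod.natCast_eq_zero_iff _ _).mp h2
  exact ⟨(m : ZMod (p ^ e)), by rw [← ha, hm]; push_cast; ring⟩

lemma phired_eq_mapRange (x : MonoidAlgebra (ZMod (p ^ e)) G) :
    (phired hdvd x).coeff
      = Finsupp.mapRange (ZMod.castHom hdvd (ZMod p)) (map_zero _) x.coeff := by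
  induction x using MonoidAlgebra.induction with
  | zero => simp
  | single_add a b f ha hb ih =>
    rw [map_add, MonoidAlgebra.coeff_add, ih, MonoidAlgebra.coeff_add,
      Finsupp.mapRange_add (map_add _), phired_single, MonoidAlgebra.coeff_single,
      MonoidAlgebra.coeff_single, Finsupp.mapRange_single]

lemma natCast_monoidAlgebra (n : ℕ) {R : Type*} [CommRing R] :
    (n : MonoidAlgebra R G) = MonoidAlgebra.single (1 : G) (n : R) :=
  (map_natCast (MonoidAlgebra.singleOneRingHom : R →+* MonoidAlgebra R G) n).symm

lemma phired_zero_decomp (hp : p.Prime) (x : MonoidAlgebra (ZMod (p ^ e)) G)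
    (h : phired hdvd x = 0) :
    ∃ z : MonoidAlgebra (ZMod (p ^ e)) G,
      x = (p : MonoidAlgebra (ZMod (p ^ e)) G) * z := by
  classical
  have hcoeff : ∀ g : G, ZMod.castHom hdvd (ZMod p) (x.coeff g) = 0 := by
    intro g
    have h2 : Finsupp.mapRange (ZMod.castHom hdvd (ZMod p)) (map_zero _) x.coeff = 0 := by
      rw [← phired_eq_mapRange, h]; rfl
    have := congrArg (fun f : G →₀ ZMod p => f g) h2
    simpa using this
  choose b hb using fun g => zmod_p_divides hdvd (x.coeff g) (hcoeff g) hp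
  set z : MonoidAlgebra (ZMod (p ^ e)) G :=
    MonoidAlgebra.ofCoeff (Finsupp.onFinset x.coeff.support
      (fun g => if x.coeff g = 0 then 0 else b g)
      (fun g hg => by
        rw [Finsupp.mem_support_iff]
        intro h0
        apply hg
        simp [h0])) with hz
  refine ⟨z, ?_⟩
  ext g
  rw [natCast_monoidAlgebra, MonoidAlgebra.coeff_single_one_mul]
  show x.coeff g = (p : ZMod (p ^ e)) * (if x.coeff g = 0 then 0 else b g)
  by_cases h0 : x.coeff g = 0
  · rw [if_pos h0, h0, mul_zero]
  · rw [if_neg h0]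
    exact hb g

lemma V_torsion (hp : p.Prime) (he : 1 ≤ e) (hG : IsPGroup p G)
    (u : (MonoidAlgebra (ZMod (p ^ e)) G)ˣ) (hu : u ∈ Vgrp (ZMod (p ^ e)) G) :
    ∃ k, u ^ p ^ k = 1 := by
  have hdvd : p ∣ p ^ e := dvd_pow_self p (by omega)
  obtain ⟨n, hn⟩ := uniform_tor p (fun g : G => hG g)
  set x : MonoidAlgebra (ZMod (p ^ e)) G := (u : MonoidAlgebra (ZMod (p ^ e)) G) with hx
  have haug : aug (ZMod (p ^ e)) G x = 1 := (mem_Vgrp_iff u).mp hu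
  have h1 : phired hdvd x ^ p ^ n = 1 := by
    rw [frob_pow hp n (phired hdvd x)]
    have hfun : (fun g : G => g ^ p ^ n) = fun _ : G => (1 : G) := funext hn
    rw [hfun, mapDomain_const_one, aug_phired, haug, map_one]
    exact (MonoidAlgebra.one_def).symm
  have h2 : phired hdvd (x ^ p ^ n - 1) = 0 := by
    rw [map_sub, map_pow, map_one, h1, sub_self]
  obtain ⟨z, hzeq⟩ := phired_zero_decomp hdvd hp _ h2
  have h3 : x ^ p ^ n = 1 + (p : MonoidAlgebra (ZMod (p ^ e)) G) * z := by
    rw [← hzeq]; ring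
  obtain ⟨w, hw⟩ := one_add_p_pow p z (e - 1)
  have hpe : ((p : MonoidAlgebra (ZMod (p ^ e)) G)) ^ (e - 1 + 1) = 0 := by
    have : e - 1 + 1 = e := by omega
    rw [this, ← Nat.cast_pow, natCast_monoidAlgebra, ZMod.natCast_self]
    exact MonoidAlgebra.single_zero 1
  have h4 : x ^ (p ^ n * p ^ (e - 1)) = 1 := by
    rw [pow_mul, h3, hw, hpe, zero_mul, add_zero]
  refine ⟨n + (e - 1), ?_⟩
  apply Units.ext
  rw [← pow_add] at h4
  calc ((u ^ p ^ (n + (e - 1)) : (MonoidAlgebra (ZMod (p ^ e)) G)ˣ)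
      : MonoidAlgebra (ZMod (p ^ e)) G)
      = x ^ p ^ (n + (e - 1)) := by rw [hx]; exact Units.val_pow_eq_pow_val u _
    _ = 1 := h4

lemma V_purity (hp : p.Prime) (hdvd : p ∣ p ^ e) (j : ℕ) (g : G)
    (u : (MonoidAlgebra (ZMod (p ^ e)) G)ˣ)
    (hval : ((u : MonoidAlgebra (ZMod (p ^ e)) G)) ^ p ^ j
      = MonoidAlgebra.single g 1) :
    ∃ h : G, h ^ p ^ j = g := by
  haveI : Fact p.Prime := ⟨hp⟩
  have h1 : (phired hdvd ((u : MonoidAlgebra (ZMod (p ^ e)) G))) ^ p ^ j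
      = MonoidAlgebra.single g 1 := by
    rw [← map_pow, hval, show (MonoidAlgebra.single g (1 : ZMod (p ^ e))
      : MonoidAlgebra (ZMod (p ^ e)) G) = MonoidAlgebra.single g 1 from rfl,
      phired_single, map_one]
  rw [frob_pow hp j] at h1
  have h2 : (MonoidAlgebra.mapDomain (fun h : G => h ^ p ^ j)
      (phired hdvd ((u : MonoidAlgebra (ZMod (p ^ e)) G)))).coeff g ≠ 0 := by
    rw [h1, MonoidAlgebra.coeff_single, Finsupp.single_eq_same]
    exact one_ne_zero
  exact exists_of_mapDomain_ne_zero h2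

end PartII

/-- `G` is a direct factor of `V(Z_{p^e}G)`: there is a subgroup `L ≤ V` with
`ι(G) ∩ L = 1` and `V = ι(G) · L`. -/
theorem stmt_10 (p e : ℕ) (hp : p.Prime) (he : 1 ≤ e)
    (G : Type*) [CommGroup G] [Fintype G] (hG : IsPGroup p G) :
    ∃ L : Subgroup (MonoidAlgebra (ZMod (p ^ e)) G)ˣ,
      L ≤ Vgrp (ZMod (p ^ e)) G ∧
      (iota (ZMod (p ^ e)) G).range ⊓ L = ⊥ ∧
      (∀ u ∈ Vgrp (ZMod (p ^ e)) G, ∃ g : G, ∃ l ∈ L, u = iota (ZMod (p ^ e)) G g * l) := by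
  classical
  set R := ZMod (p ^ e) with hR
  have hdvd : p ∣ p ^ e := dvd_pow_self p (by omega)
  haveI : NeZero (p ^ e) := ⟨pow_ne_zero _ hp.ne_zero⟩
  haveI : Finite (MonoidAlgebra R G) :=
    Finite.of_equiv _ (MonoidAlgebra.coeffEquiv.trans Finsupp.equivFunOnFinite).symm
  set V := Vgrp R G with hV
  set A := ↥V with hA
  -- the embedding of G into V
  have hmem : ∀ g : G, iota R G g ∈ V := fun g => iota_mem_Vgrp g
  set iotaV : G →* A := (iota R G).codRestrict V hmem with hiotaV
  set H : Subgroup A := iotaV.range with hH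
  -- torsion
  have htor : ∀ a : A, ∃ k, a ^ p ^ k = 1 := by
    intro a
    obtain ⟨k, hk⟩ := V_torsion hp he hG (a : (MonoidAlgebra R G)ˣ) a.2
    exact ⟨k, Subtype.ext (by push_cast; exact hk)⟩
  -- purity
  have hpure : ∀ (j : ℕ) (a : A), a ^ p ^ j ∈ H → ∃ h ∈ H, h ^ p ^ j = a ^ p ^ j := by
    intro j a ha
    obtain ⟨g, hg⟩ := ha
    have hgval : (iota R G g : MonoidAlgebra R G)
        = (((a : (MonoidAlgebra R G)ˣ)) : MonoidAlgebra R G) ^ p ^ j := by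
      have h1 : (iotaV g : (MonoidAlgebra R G)ˣ) = ((a ^ p ^ j : A) : (MonoidAlgebra R G)ˣ) :=
        congrArg Subtype.val hg
      have h2 : (iotaV g : (MonoidAlgebra R G)ˣ) = iota R G g := rfl
      rw [h2] at h1
      rw [h1]
      rfl
    have hval : (((a : (MonoidAlgebra R G)ˣ)) : MonoidAlgebra R G) ^ p ^ j
        = MonoidAlgebra.single g 1 := by
      rw [← hgval, iota_val]
    obtain ⟨h, hh⟩ := V_purity hp hdvd j g _ hval
    refine ⟨iotaV h, ⟨h, rfl⟩, ?_⟩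
    apply Subtype.ext
    apply Units.ext
    have h3 : ((iotaV h : A) : (MonoidAlgebra R G)ˣ) = iota R G h := rfl
    calc (((iotaV h ^ p ^ j : A) : (MonoidAlgebra R G)ˣ) : MonoidAlgebra R G)
        = ((iota R G h : (MonoidAlgebra R G)ˣ) : MonoidAlgebra R G) ^ p ^ j := rfl
      _ = MonoidAlgebra.single (h ^ p ^ j) 1 := by
          rw [iota_val, MonoidAlgebra.single_pow, one_pow]
      _ = MonoidAlgebra.single g 1 := by rw [hh]
      _ = (((a ^ p ^ j : A) : (MonoidAlgebra R G)ˣ) : MonoidAlgebra R G) := by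
          rw [← hval]
          rfl
  obtain ⟨L0, hL0bot, hL0dec⟩ := partP hp (Nat.card H) A H le_rfl htor hpure
  set L : Subgroup (MonoidAlgebra R G)ˣ := L0.map V.subtype with hL
  refine ⟨L, ?_, ?_, ?_⟩
  · rintro x ⟨l0, hl0, rfl⟩
    exact l0.2
  · rw [eq_bot_iff]
    rintro x ⟨hx1, hx2⟩
    obtain ⟨g, hg⟩ := hx1
    obtain ⟨l0, hl0, hlx⟩ := hx2
    have hxV : x ∈ V := by rw [← hlx]; exact l0.2
    have hmemH : (⟨x, hxV⟩ : A) ∈ H := by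
      refine ⟨g, ?_⟩
      apply Subtype.ext
      show iota R G g = x
      exact hg
    have hmemL0 : (⟨x, hxV⟩ : A) ∈ L0 := by
      have : l0 = (⟨x, hxV⟩ : A) := Subtype.ext hlx
      rw [← this]; exact hl0
    have : (⟨x, hxV⟩ : A) ∈ H ⊓ L0 := ⟨hmemH, hmemL0⟩
    rw [hL0bot] at this
    have hx1 : (⟨x, hxV⟩ : A) = 1 := this
    have := congrArg Subtype.val hx1
    simpa using this
  · intro u hu
    obtain ⟨h, hh, l, hl, hdec⟩ := hL0dec ⟨u, hu⟩
    obtain ⟨g, hg⟩ := hh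
    refine ⟨g, (l : (MonoidAlgebra R G)ˣ), ⟨l, hl, rfl⟩, ?_⟩
    have := congrArg Subtype.val hdec
    push_cast at this
    rw [this, ← hg]
    rfl
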